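/- Under ignorability and positivity, for any tilting function f ≥ 0 with 0 < E[f(X)] < ∞, the weighted estimand identity holds: E[w(X,T)·T·Y] / E[f(X)] − E[w(X,T)·(1−T)·Y] / E[f(X)] = E_g[τ(X)], where w(x,t) = f(x)/[t·e(x)+(1−t)(1−e(x))], g(x) ∝ f(x)p(x), and τ(x) = E[Y(1)−Y(0)|X=x]. (Weighted estimator identifies the tilted average treatment effect.) -/

import Mathlib

open MeasureTheory ProbabilityTheory Real

section Aux
open Set

variable {Ω : Type*} {m' : MeasurableSpace Ω} [mΩ : MeasurableSpace Ω] [StandardBorelSpace Ω]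
  [Nonempty Ω] {μ : Measure Ω} [IsFiniteMeasure μ]

lemma ae_indepFun_of_condIndepFun (hm' : m' ≤ mΩ) {ξ η : Ω → ℝ} (hξ : Measurable ξ) (hη : Measurable η)
    (h : CondIndepFun m' hm' ξ η μ) :
    ∀ᵐ ω ∂μ, IndepFun ξ η (condExpKernel μ m' ω) := by
  have h' := Kernel.indepFun_iff_measure_inter_preimage_eq_mul.mp h
  have hae : ∀ᵐ ω ∂(μ.trim hm'), ∀ p q : ℚ,
      condExpKernel μ m' ω (ξ ⁻¹' Iic (p : ℝ) ∩ η ⁻¹' Iic (q : ℝ))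
        = condExpKernel μ m' ω (ξ ⁻¹' Iic (p : ℝ)) * condExpKernel μ m' ω (η ⁻¹' Iic (q : ℝ)) := by
    rw [ae_all_iff]
    intro p
    rw [ae_all_iff]
    intro q
    exact h' _ _ measurableSet_Iic measurableSet_Iic
  refine (ae_of_ae_trim hm' hae).mono fun ω hω => ?_
  haveI : IsProbabilityMeasure (condExpKernel μ m' ω) :=
    IsMarkovKernel.isProbabilityMeasure ω
  have hpi : IsPiSystem (⋃ a : ℚ, {Iic (a : ℝ)}) := isPiSystem_Iic_rat
  have hgen : (Real.measurableSpace) =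
      MeasurableSpace.generateFrom (⋃ a : ℚ, {Iic (a : ℝ)}) :=
    borel_eq_generateFrom_Iic_rat ▸ (BorelSpace.measurable_eq (α := ℝ))
  refine IndepSets.indep (hξ.comap_le) (hη.comap_le)
    (hpi.comap ξ) (hpi.comap η) ?_ ?_ ?_
  · rw [hgen, MeasurableSpace.comap_generateFrom]; rfl
  · rw [hgen, MeasurableSpace.comap_generateFrom]; rfl
  · rintro _ _ ⟨s, hs, rfl⟩ ⟨t, ht, rfl⟩
    simp only [mem_iUnion, mem_singleton_iff] at hs ht
    obtain ⟨p, rfl⟩ := hs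
    obtain ⟨q, rfl⟩ := ht
    exact Filter.Eventually.of_forall fun _ => hω p q

lemma condexp_mul_of_condIndepFun' (hm' : m' ≤ mΩ) {ξ η : Ω → ℝ}
    (hξ : Measurable ξ) (hη : Measurable η)
    (h : CondIndepFun m' hm' ξ η μ)
    (hξ_int : Integrable ξ μ) (hη_int : Integrable η μ)
    (hmul_int : Integrable (fun ω => ξ ω * η ω) μ) :
    μ[fun ω => ξ ω * η ω | m'] =ᵐ[μ] fun ω => (μ[ξ | m']) ω * (μ[η | m']) ω := by
  have h1 := condExp_ae_eq_integral_condExpKernel hm' hmul_int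
  have h2 := condExp_ae_eq_integral_condExpKernel hm' hξ_int
  have h3 := condExp_ae_eq_integral_condExpKernel hm' hη_int
  have hind := ae_indepFun_of_condIndepFun hm' hξ hη h
  have hi1 := hξ_int.condExpKernel_ae (m := m')
  have hi2 := hη_int.condExpKernel_ae (m := m')
  filter_upwards [h1, h2, h3, hind, hi1, hi2] with ω e1 e2 e3 eind ei1 ei2
  rw [e1, e2, e3]
  exact IndepFun.integral_fun_mul_eq_mul_integral eind ei1.aestronglyMeasurable ei2.aestronglyMeasurable

end Aux

/-- **The weighted estimator identifies the tilted average treatment effect.**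
Under ignorability and positivity, for a tilting function `f ≥ 0` with
`0 < E[f(X)] < ∞`, with balancing weights `w(x,1) = f(x)/e(x)`,
`w(x,0) = f(x)/(1−e(x))`:
`E[w(X,T)·T·Y]/E[f(X)] − E[w(X,T)·(1−T)·Y]/E[f(X)] = E[f(X)τ(X)]/E[f(X)] = E_g[τ(X)]`. -/
theorem weighted_estimand_identity
    {Ω : Type*} [mΩ : MeasurableSpace Ω] [StandardBorelSpace Ω] [Nonempty Ω]
    {𝒳 : Type*} [MeasurableSpace 𝒳]
    (μ : Measure Ω) [IsProbabilityMeasure μ]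
    (X : Ω → 𝒳) (T : Ω → ℝ) (Y0 Y1 : Ω → ℝ)
    (hX : Measurable X) (hT : Measurable T)
    (hY0 : Measurable Y0) (hY1 : Measurable Y1)
    (hT_bin : ∀ ω, T ω = 0 ∨ T ω = 1)
    (hY0_int : Integrable Y0 μ) (hY1_int : Integrable Y1 μ)
    (mX : MeasurableSpace Ω)
    (hmX : mX = MeasurableSpace.comap X inferInstance)
    (hle : mX ≤ mΩ)
    (hignorability : CondIndepFun mX hle (fun ω => (Y0 ω, Y1 ω)) T μ)
    (e : 𝒳 → ℝ) (he_meas : Measurable e)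
    (he_version : (μ[T | mX]) =ᵐ[μ] fun ω => e (X ω))
    (hpositivity : ∀ x, 0 < e x ∧ e x < 1)
    (τ : 𝒳 → ℝ) (hτ_meas : Measurable τ)
    (hτ_version : (μ[fun ω => Y1 ω - Y0 ω | mX]) =ᵐ[μ] fun ω => τ (X ω))
    (f : 𝒳 → ℝ) (hf_meas : Measurable f) (hf_nonneg : ∀ x, 0 ≤ f x)
    (hfX_int : Integrable (fun ω => f (X ω)) μ)
    (hfX_pos : 0 < ∫ ω, f (X ω) ∂μ)
    (Y : Ω → ℝ)
    (hY : ∀ ω, Y ω = T ω * Y1 ω + (1 - T ω) * Y0 ω)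
    (hint_t : Integrable (fun ω => f (X ω) / e (X ω) * (T ω * Y ω)) μ)
    (hint_c : Integrable (fun ω => f (X ω) / (1 - e (X ω)) * ((1 - T ω) * Y ω)) μ)
    (hint_τ : Integrable (fun ω => f (X ω) * τ (X ω)) μ) :
    (∫ ω, f (X ω) / e (X ω) * (T ω * Y ω) ∂μ) / (∫ ω, f (X ω) ∂μ)
      - (∫ ω, f (X ω) / (1 - e (X ω)) * ((1 - T ω) * Y ω) ∂μ) / (∫ ω, f (X ω) ∂μ)
      = (∫ ω, f (X ω) * τ (X ω) ∂μ) / (∫ ω, f (X ω) ∂μ) := by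
  -- Basic measurability and integrability facts
  have hT1 : ∀ ω, |T ω| ≤ 1 := by
    intro ω; rcases hT_bin ω with h | h <;> simp [h]
  have hT_int : Integrable T μ := by
    refine Integrable.mono (integrable_const (1 : ℝ)) hT.aestronglyMeasurable ?_
    exact Filter.Eventually.of_forall fun ω => by
      simpa [Real.norm_eq_abs] using hT1 ω
  have hY1T_int : Integrable (fun ω => Y1 ω * T ω) μ := by
    refine Integrable.mono hY1_int (hY1.mul hT).aestronglyMeasurable ?_
    refine Filter.Eventually.of_forall fun ω => ?_
    simp only [Real.norm_eq_abs, abs_mul]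
    calc |Y1 ω| * |T ω| ≤ |Y1 ω| * 1 := by
          exact mul_le_mul_of_nonneg_left (hT1 ω) (abs_nonneg _)
      _ = |Y1 ω| := mul_one _
  have hY0T_int : Integrable (fun ω => Y0 ω * T ω) μ := by
    refine Integrable.mono hY0_int (hY0.mul hT).aestronglyMeasurable ?_
    refine Filter.Eventually.of_forall fun ω => ?_
    simp only [Real.norm_eq_abs, abs_mul]
    calc |Y0 ω| * |T ω| ≤ |Y0 ω| * 1 := by
          exact mul_le_mul_of_nonneg_left (hT1 ω) (abs_nonneg _)
      _ = |Y0 ω| := mul_one _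
  -- Conditional independence of Y1 and T, Y0 and T
  have hCI1 : CondIndepFun mX hle Y1 T μ := by
    have := hignorability.comp (measurable_snd : Measurable fun p : ℝ × ℝ => p.2)
      (measurable_id : Measurable fun t : ℝ => t)
    exact this
  have hCI0 : CondIndepFun mX hle Y0 T μ := by
    have := hignorability.comp (measurable_fst : Measurable fun p : ℝ × ℝ => p.1)
      (measurable_id : Measurable fun t : ℝ => t)
    exact this
  -- Product rules
  have prod1 : μ[fun ω => Y1 ω * T ω | mX]
      =ᵐ[μ] fun ω => (μ[Y1 | mX]) ω * (μ[T | mX]) ω :=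
    condexp_mul_of_condIndepFun' (mΩ := mΩ) hle hY1 hT hCI1 hY1_int hT_int hY1T_int
  have prod0 : μ[fun ω => Y0 ω * T ω | mX]
      =ᵐ[μ] fun ω => (μ[Y0 | mX]) ω * (μ[T | mX]) ω :=
    condexp_mul_of_condIndepFun' (mΩ := mΩ) hle hY0 hT hCI0 hY0_int hT_int hY0T_int
  -- mX-measurability of functions of X
  have hXmX : Measurable[mX] X := by
    rw [hmX]; exact fun s hs => ⟨s, hs, rfl⟩
  -- key conditional expectation identities
  have keyT : μ[fun ω => T ω * Y1 ω | mX]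
      =ᵐ[μ] fun ω => e (X ω) * (μ[Y1 | mX]) ω := by
    have h0 : (fun ω => T ω * Y1 ω) = fun ω => Y1 ω * T ω := by
      funext ω; ring
    rw [h0]
    filter_upwards [prod1, he_version] with ω h1 h2
    rw [h1, h2]; ring
  have keyC : μ[fun ω => (1 - T ω) * Y0 ω | mX]
      =ᵐ[μ] fun ω => (1 - e (X ω)) * (μ[Y0 | mX]) ω := by
    have h0 : (fun ω => (1 - T ω) * Y0 ω) = Y0 - fun ω => Y0 ω * T ω := by
      funext ω; simp [Pi.sub_apply]; ring
    rw [h0]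
    have hsub := condExp_sub (m := mX) hY0_int hY0T_int
    filter_upwards [hsub, prod0, he_version] with ω h1 h2 h3
    rw [h1, Pi.sub_apply, h2, h3]; ring
  -- Rewrite the observed-outcome integrands
  have hrw1 : (fun ω => f (X ω) / e (X ω) * (T ω * Y ω))
      = (fun ω => f (X ω) / e (X ω)) * fun ω => T ω * Y1 ω := by
    funext ω; rcases hT_bin ω with h | h <;> simp [Pi.mul_apply, hY ω, h]
  have hrw0 : (fun ω => f (X ω) / (1 - e (X ω)) * ((1 - T ω) * Y ω))
      = (fun ω => f (X ω) / (1 - e (X ω))) * fun ω => (1 - T ω) * Y0 ω := by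
    funext ω; rcases hT_bin ω with h | h <;> simp [Pi.mul_apply, hY ω, h]
  -- Treated term
  have hHsm1 : StronglyMeasurable[mX] fun ω => f (X ω) / e (X ω) :=
    ((hf_meas.div he_meas).comp hXmX).stronglyMeasurable
  have hHsm0 : StronglyMeasurable[mX] fun ω => f (X ω) / (1 - e (X ω)) :=
    ((hf_meas.div (measurable_const.sub he_meas)).comp hXmX).stronglyMeasurable
  have hint_t' : Integrable
      ((fun ω => f (X ω) / e (X ω)) * fun ω => T ω * Y1 ω) μ := by
    rw [← hrw1]; exact hint_t
  have hint_c' : Integrable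
      ((fun ω => f (X ω) / (1 - e (X ω))) * fun ω => (1 - T ω) * Y0 ω) μ := by
    rw [← hrw0]; exact hint_c
  have hTY1_int : Integrable (fun ω => T ω * Y1 ω) μ := by
    have h0 : (fun ω => T ω * Y1 ω) = fun ω => Y1 ω * T ω := by funext ω; ring
    rw [h0]; exact hY1T_int
  have hTY0_int : Integrable (fun ω => (1 - T ω) * Y0 ω) μ := by
    have h0 : (fun ω => (1 - T ω) * Y0 ω) = Y0 - fun ω => Y0 ω * T ω := by
      funext ω; simp [Pi.sub_apply]; ring
    rw [h0]; exact hY0_int.sub hY0T_int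
  have hstepA : μ[(fun ω => f (X ω) / e (X ω)) * fun ω => T ω * Y1 ω | mX]
      =ᵐ[μ] fun ω => f (X ω) * (μ[Y1 | mX]) ω := by
    refine (condExp_mul_of_stronglyMeasurable_left hHsm1 hint_t' hTY1_int).trans ?_
    filter_upwards [keyT] with ω hω
    show f (X ω) / e (X ω) * (μ[fun ω => T ω * Y1 ω | mX]) ω = _
    rw [hω]
    have hne := (hpositivity (X ω)).1.ne'
    field_simp
  have hstepB : μ[(fun ω => f (X ω) / (1 - e (X ω))) * fun ω => (1 - T ω) * Y0 ω | mX]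
      =ᵐ[μ] fun ω => f (X ω) * (μ[Y0 | mX]) ω := by
    refine (condExp_mul_of_stronglyMeasurable_left hHsm0 hint_c' hTY0_int).trans ?_
    filter_upwards [keyC] with ω hω
    show f (X ω) / (1 - e (X ω)) * (μ[fun ω => (1 - T ω) * Y0 ω | mX]) ω = _
    rw [hω]
    have hne : (1 : ℝ) - e (X ω) ≠ 0 := by
      have := (hpositivity (X ω)).2
      linarith
    field_simp
  have hintA : Integrable (fun ω => f (X ω) * (μ[Y1 | mX]) ω) μ :=
    integrable_condExp.congr hstepA
  have hintB : Integrable (fun ω => f (X ω) * (μ[Y0 | mX]) ω) μ :=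
    integrable_condExp.congr hstepB
  have eqA : ∫ ω, f (X ω) / e (X ω) * (T ω * Y ω) ∂μ
      = ∫ ω, f (X ω) * (μ[Y1 | mX]) ω ∂μ := by
    calc ∫ ω, f (X ω) / e (X ω) * (T ω * Y ω) ∂μ
        = ∫ ω, ((fun ω => f (X ω) / e (X ω)) * fun ω => T ω * Y1 ω) ω ∂μ := by
          rw [← hrw1]
      _ = ∫ ω, (μ[(fun ω => f (X ω) / e (X ω)) * fun ω => T ω * Y1 ω | mX]) ω ∂μ := by
          rw [integral_condExp hle]
      _ = ∫ ω, f (X ω) * (μ[Y1 | mX]) ω ∂μ := integral_congr_ae hstepA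
  have eqB : ∫ ω, f (X ω) / (1 - e (X ω)) * ((1 - T ω) * Y ω) ∂μ
      = ∫ ω, f (X ω) * (μ[Y0 | mX]) ω ∂μ := by
    calc ∫ ω, f (X ω) / (1 - e (X ω)) * ((1 - T ω) * Y ω) ∂μ
        = ∫ ω, ((fun ω => f (X ω) / (1 - e (X ω))) * fun ω => (1 - T ω) * Y0 ω) ω ∂μ := by
          rw [← hrw0]
      _ = ∫ ω, (μ[(fun ω => f (X ω) / (1 - e (X ω))) * fun ω => (1 - T ω) * Y0 ω | mX]) ω ∂μ := by
          rw [integral_condExp hle]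
      _ = ∫ ω, f (X ω) * (μ[Y0 | mX]) ω ∂μ := integral_congr_ae hstepB
  have eqC : ∫ ω, f (X ω) * τ (X ω) ∂μ
      = ∫ ω, (f (X ω) * (μ[Y1 | mX]) ω - f (X ω) * (μ[Y0 | mX]) ω) ∂μ := by
    refine integral_congr_ae ?_
    have hsub := condExp_sub (m := mX) hY1_int hY0_int
    filter_upwards [hτ_version, hsub] with ω h1 h2
    have : τ (X ω) = (μ[Y1 | mX]) ω - (μ[Y0 | mX]) ω := by
      rw [← h1]
      have h2' : (μ[fun ω => Y1 ω - Y0 ω | mX]) ω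
          = (μ[Y1 | mX]) ω - (μ[Y0 | mX]) ω := by
        have : (fun ω => Y1 ω - Y0 ω) = Y1 - Y0 := rfl
        rw [this, h2, Pi.sub_apply]
      exact h2'
    rw [this]; ring
  rw [eqA, eqB, eqC, div_sub_div_same, ← integral_sub hintA hintB]
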